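/- Work on ℝ⁴ with coordinates x⁰ = t and x¹, x², x³, and let H : ℝ³ → ℝ and f, g : ℝ → ℝ be smooth with f > 0 and g > 0 everywhere. Define the diagonal metric components g_{00} = f(H(x¹,x²,x³)), g_{jj} = −g(H(x¹,x²,x³)) for j = 1,2,3, and g_{μν} = 0 for μ ≠ ν, with inverse components g^{00} = 1/f(H), g^{jj} = −1/g(H), g^{μν} = 0 for μ ≠ ν. Define Γ^τ_{νλ} = ½ Σ_ρ g^{τρ}(∂_ν g_{ρλ} + ∂_λ g_{ρν} − ∂_ρ g_{νλ}) and Γ_{μνλ} = Σ_τ η_{μτ} Γ^τ_{νλ}, where η = diag(+1,−1,−1,−1). Then the components of Γ are: Γ_{0j0} = Γ_{00j} = ½ ∂_j(log(f∘H)) for 1 ≤ j ≤ 3; Γ_{j00} = −∂_j(f∘H)/(2 g(H)) for 1 ≤ j ≤ 3; Γ_{kjk} = Γ_{kkj} = −½ ∂_j(log(g∘H)) for 1 ≤ j, k ≤ 3; Γ_{jkk} = ½ ∂_j(log(g∘H)) for 1 ≤ j ≠ k ≤ 3; and every component of Γ not of one of these forms is zero. -/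

import Mathlib

/-- The partial derivative of a function on `ℝ⁴` (or `ℝⁿ`) in the `j`-th coordinate
direction. -/
noncomputable def pdR {n : ℕ} (j : Fin n) (f : (Fin n → ℝ) → ℝ) : (Fin n → ℝ) → ℝ :=
  fun x => fderiv ℝ f x (Pi.single j 1)

/-- The spatial part `(x¹, x², x³)` of a point of `ℝ⁴` (with `x⁰ = t`). -/
def sp (x : Fin 4 → ℝ) : Fin 3 → ℝ := fun j => x j.succ

/-- The diagonal metric components of `ds² = f(H) dt² − g(H) d\vec{x}²`:
`g₀₀ = f(H(x¹,x²,x³))`, `g_jj = −g(H(x¹,x²,x³))` for `j = 1,2,3`, zero off-diagonal. -/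
noncomputable def met (f g : ℝ → ℝ) (H : (Fin 3 → ℝ) → ℝ) (μ ν : Fin 4) :
    (Fin 4 → ℝ) → ℝ :=
  fun x => if μ = ν then (if μ = 0 then f (H (sp x)) else -(g (H (sp x)))) else 0

/-- The inverse metric components: `g⁰⁰ = 1/f(H)`, `g^jj = −1/g(H)`, zero off-diagonal. -/
noncomputable def metInv (f g : ℝ → ℝ) (H : (Fin 3 → ℝ) → ℝ) (μ ν : Fin 4) :
    (Fin 4 → ℝ) → ℝ :=
  fun x => if μ = ν then (if μ = 0 then (f (H (sp x)))⁻¹ else -(g (H (sp x)))⁻¹) else 0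

/-- The flat metric `η = diag(+1, −1, −1, −1)`. -/
noncomputable def eta (μ ν : Fin 4) : ℝ :=
  if μ = ν then (if μ = 0 then 1 else -1) else 0

/-- The Christoffel symbols
`Γ^τ_{νλ} = ½ ∑_ρ g^{τρ} (∂_ν g_{ρλ} + ∂_λ g_{ρν} − ∂_ρ g_{νλ})`. -/
noncomputable def chrUp (f g : ℝ → ℝ) (H : (Fin 3 → ℝ) → ℝ) (τ ν lam : Fin 4) :
    (Fin 4 → ℝ) → ℝ :=
  fun x => (1 / 2 : ℝ) * ∑ ρ : Fin 4, metInv f g H τ ρ x *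
    (pdR ν (met f g H ρ lam) x + pdR lam (met f g H ρ ν) x - pdR ρ (met f g H ν lam) x)

/-- The Christoffel symbols with the upper index lowered by the flat metric `η`:
`Γ_{μνλ} = ∑_τ η_{μτ} Γ^τ_{νλ}`. -/
noncomputable def chrLow (f g : ℝ → ℝ) (H : (Fin 3 → ℝ) → ℝ) (μ ν lam : Fin 4) :
    (Fin 4 → ℝ) → ℝ :=
  fun x => ∑ τ : Fin 4, eta μ τ * chrUp f g H τ ν lam x

noncomputable def spL : (Fin 4 → ℝ) →L[ℝ] (Fin 3 → ℝ) :=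
  ContinuousLinearMap.pi fun j => ContinuousLinearMap.proj j.succ

noncomputable def dD (F : (Fin 3 → ℝ) → ℝ) (j : Fin 4) (x : Fin 4 → ℝ) : ℝ :=
  fderiv ℝ F (sp x) (sp (Pi.single j 1))

lemma sp_single_zero : sp (Pi.single (0 : Fin 4) 1) = 0 := by
  funext i
  simp [sp, Pi.single_apply, (Fin.succ_ne_zero i)]

lemma dD_zero (F : (Fin 3 → ℝ) → ℝ) (x : Fin 4 → ℝ) : dD F 0 x = 0 := by
  simp [dD, sp_single_zero]

lemma hasfd {F : (Fin 3 → ℝ) → ℝ} (hF : Differentiable ℝ F) (x : Fin 4 → ℝ) :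
    HasFDerivAt (fun y => F (sp y)) ((fderiv ℝ F (sp x)).comp spL) x :=
  ((hF (sp x)).hasFDerivAt.comp x spL.hasFDerivAt : _)

lemma pd_comp {F : (Fin 3 → ℝ) → ℝ} (hF : Differentiable ℝ F) (j : Fin 4) (x : Fin 4 → ℝ) :
    pdR j (fun y => F (sp y)) x = dD F j x := by
  have h := (hasfd hF x).fderiv
  simp only [pdR, h]
  rfl

lemma pd_neg {F : (Fin 3 → ℝ) → ℝ} (hF : Differentiable ℝ F) (j : Fin 4) (x : Fin 4 → ℝ) :
    pdR j (fun y => -(F (sp y))) x = -(dD F j x) := by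
  have h : fderiv ℝ (fun y => -(F (sp y))) x = _ := ((hasfd hF x).neg).fderiv
  simp only [pdR, h]
  rfl

lemma pd_log' {F : (Fin 3 → ℝ) → ℝ} (hF : Differentiable ℝ F) (j : Fin 4) (x : Fin 4 → ℝ)
    (hne : F (sp x) ≠ 0) :
    pdR j (fun y => Real.log (F (sp y))) x = (F (sp x))⁻¹ * dD F j x := by
  have h := (Real.hasDerivAt_log hne).comp_hasFDerivAt x (hasfd hF x)
  have h2 : fderiv ℝ (fun y => Real.log (F (sp y))) x
      = (F (sp x))⁻¹ • (fderiv ℝ F (sp x)).comp spL := h.fderiv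
  simp only [pdR, h2, ContinuousLinearMap.smul_apply, ContinuousLinearMap.coe_comp',
    Function.comp_apply, smul_eq_mul, dD]
  rfl

lemma pd_zero (j : Fin 4) (x : Fin 4 → ℝ) : pdR j (fun _ : Fin 4 → ℝ => (0:ℝ)) x = 0 := by
  simp [pdR]

section main
variable {H : (Fin 3 → ℝ) → ℝ} {f g : ℝ → ℝ}
variable (hH : ContDiff ℝ (⊤ : ℕ∞) H) (hf : ContDiff ℝ (⊤ : ℕ∞) f)
  (hg : ContDiff ℝ (⊤ : ℕ∞) g)

include hH hf hg in
lemma pd_met (ν ρ lam : Fin 4) (x : Fin 4 → ℝ) :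
    pdR ν (met f g H ρ lam) x =
      if ρ = lam then (if ρ = 0 then dD (fun u => f (H u)) ν x
        else -(dD (fun u => g (H u)) ν x)) else 0 := by
  have hF : Differentiable ℝ (fun u => f (H u)) :=
    (hf.differentiable (by simp)).comp (hH.differentiable (by simp))
  have hG : Differentiable ℝ (fun u => g (H u)) :=
    (hg.differentiable (by simp)).comp (hH.differentiable (by simp))
  by_cases h : ρ = lam
  · subst h
    by_cases h0 : ρ = 0
    · subst h0
      have hm : met f g H 0 0 = fun y => (fun u => f (H u)) (sp y) := by
        funext y; simp [met]
      rw [hm, pd_comp hF]; simp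
    · have hm : met f g H ρ ρ = fun y => -((fun u => g (H u)) (sp y)) := by
        funext y; simp [met, h0]
      rw [hm, pd_neg hG]; simp [h0]
  · have hm : met f g H ρ lam = fun _ => (0:ℝ) := by
      funext y; simp [met, h]
    rw [hm, pd_zero]; simp [h]

include hH hf hg in
lemma chr_master (μ ν lam : Fin 4) (x : Fin 4 → ℝ) :
    chrLow f g H μ ν lam x =
      (if μ = 0 then (f (H (sp x)))⁻¹ else (g (H (sp x)))⁻¹) * (1/2) *
        ((if μ = lam then (if μ = 0 then dD (fun u => f (H u)) ν x
            else -(dD (fun u => g (H u)) ν x)) else 0)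
         + (if μ = ν then (if μ = 0 then dD (fun u => f (H u)) lam x
            else -(dD (fun u => g (H u)) lam x)) else 0)
         - (if ν = lam then (if ν = 0 then dD (fun u => f (H u)) μ x
            else -(dD (fun u => g (H u)) μ x)) else 0)) := by
  have hcl : chrLow f g H μ ν lam x = eta μ μ * chrUp f g H μ ν lam x := by
    unfold chrLow
    rw [Finset.sum_eq_single μ]
    · intro τ _ hτ; simp [eta, hτ.symm]
    · simp
  have hcu : chrUp f g H μ ν lam x = (1/2 : ℝ) * (metInv f g H μ μ x *
      (pdR ν (met f g H μ lam) x + pdR lam (met f g H μ ν) x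
        - pdR μ (met f g H ν lam) x)) := by
    unfold chrUp
    congr 1
    rw [Finset.sum_eq_single μ]
    · intro ρ _ hρ; simp [metInv, hρ.symm]
    · simp
  rw [hcl, hcu, pd_met hH hf hg, pd_met hH hf hg, pd_met hH hf hg]
  by_cases hμ : μ = 0
  · simp only [eta, metInv, if_pos rfl, if_pos hμ, hμ, if_true]
    ring
  · simp only [eta, metInv, if_pos rfl, if_neg hμ, if_true]
    ring
end main

/-- (Christoffel symbols of the isotropic metric
`ds² = f(H) dt² − g(H) d\vec{x}²` on `ℝ⁴`, Section 4 of the paper.)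
With `x⁰ = t` and `H : ℝ³ → ℝ`, `f, g : ℝ → ℝ` smooth with `f, g > 0`:
`Γ_{0j0} = Γ_{00j} = ½ ∂_j log(f∘H)` for `1 ≤ j ≤ 3`;
`Γ_{j00} = −∂_j(f∘H)/(2 g(H))` for `1 ≤ j ≤ 3`;
`Γ_{kjk} = Γ_{kkj} = −½ ∂_j log(g∘H)` for `1 ≤ j, k ≤ 3`;
`Γ_{jkk} = ½ ∂_j log(g∘H)` for `1 ≤ j ≠ k ≤ 3`;
and every component of `Γ` not of one of these forms is zero. -/
theorem stmt12 (H : (Fin 3 → ℝ) → ℝ) (f g : ℝ → ℝ)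
    (hH : ContDiff ℝ (⊤ : ℕ∞) H) (hf : ContDiff ℝ (⊤ : ℕ∞) f)
    (hg : ContDiff ℝ (⊤ : ℕ∞) g)
    (hfpos : ∀ t, 0 < f t) (hgpos : ∀ t, 0 < g t) :
    ∀ x : Fin 4 → ℝ,
      (∀ j : Fin 4, j ≠ 0 →
        chrLow f g H 0 j 0 x = (1 / 2 : ℝ) * pdR j (fun y => Real.log (f (H (sp y)))) x ∧
        chrLow f g H 0 0 j x = (1 / 2 : ℝ) * pdR j (fun y => Real.log (f (H (sp y)))) x) ∧
      (∀ j : Fin 4, j ≠ 0 →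
        chrLow f g H j 0 0 x = -(pdR j (fun y => f (H (sp y))) x) / (2 * g (H (sp x)))) ∧
      (∀ j k : Fin 4, j ≠ 0 → k ≠ 0 →
        chrLow f g H k j k x = -(1 / 2 : ℝ) * pdR j (fun y => Real.log (g (H (sp y)))) x ∧
        chrLow f g H k k j x = -(1 / 2 : ℝ) * pdR j (fun y => Real.log (g (H (sp y)))) x) ∧
      (∀ j k : Fin 4, j ≠ 0 → k ≠ 0 → j ≠ k →
        chrLow f g H j k k x = (1 / 2 : ℝ) * pdR j (fun y => Real.log (g (H (sp y)))) x) ∧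
      (∀ μ ν lam : Fin 4,
        ¬ ((μ = 0 ∧ ν ≠ 0 ∧ lam = 0) ∨ (μ = 0 ∧ ν = 0 ∧ lam ≠ 0) ∨
           (μ ≠ 0 ∧ ν = 0 ∧ lam = 0) ∨ (μ ≠ 0 ∧ ν ≠ 0 ∧ lam = μ) ∨
           (μ ≠ 0 ∧ lam ≠ 0 ∧ ν = μ) ∨ (μ ≠ 0 ∧ ν ≠ 0 ∧ ν = lam ∧ μ ≠ ν)) →
        chrLow f g H μ ν lam x = 0) := by
  have hF : Differentiable ℝ (fun u => f (H u)) :=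
    (hf.differentiable (by simp)).comp (hH.differentiable (by simp))
  have hG : Differentiable ℝ (fun u => g (H u)) :=
    (hg.differentiable (by simp)).comp (hH.differentiable (by simp))
  intro x
  have hfne : f (H (sp x)) ≠ 0 := (hfpos _).ne'
  have hgne : g (H (sp x)) ≠ 0 := (hgpos _).ne'
  refine ⟨?_, ?_, ?_, ?_, ?_⟩
  · intro j hj
    rw [chr_master hH hf hg, chr_master hH hf hg, pd_log' hF j x hfne]
    constructor
    · simp only [if_pos rfl, if_true, if_neg (Ne.symm hj), if_neg hj]
      ring
    · simp only [if_pos rfl, if_true, if_neg (Ne.symm hj), if_neg hj]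
      ring
  · intro j hj
    rw [chr_master hH hf hg, pd_comp hF]
    simp only [if_pos rfl, if_true, if_neg hj, if_neg (Ne.symm hj)]
    ring
  · intro j k hj hk
    rw [chr_master hH hf hg, chr_master hH hf hg, pd_log' hG j x hgne]
    constructor
    · simp only [if_pos rfl, if_true, if_neg hk, if_neg hj]
      by_cases hjk : j = k
      · subst hjk
        simp only [if_pos rfl]
        ring
      · simp only [if_neg hjk, if_neg (fun h : k = j => hjk h.symm)]
        ring
    · simp only [if_pos rfl, if_true, if_neg hk, if_neg hj]
      by_cases hjk : k = j
      · subst hjk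
        simp only [if_pos rfl]
        ring
      · simp only [if_neg hjk, if_neg (fun h : j = k => hjk h.symm)]
        ring
  · intro j k hj hk hjk
    rw [chr_master hH hf hg, pd_log' hG j x hgne]
    simp only [if_pos rfl, if_true, if_neg hj, if_neg hk, if_neg hjk]
    ring
  · intro μ ν lam hnot
    rw [chr_master hH hf hg]
    by_cases hμ : μ = 0
    · subst hμ
      by_cases hν : ν = 0
      · by_cases hlam : lam = 0
        · subst hν; subst hlam
          simp [dD_zero]
        · exact absurd (Or.inr (Or.inl ⟨rfl, hν, hlam⟩)) hnot
      · by_cases hlam : lam = 0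
        · exact absurd (Or.inl ⟨rfl, hν, hlam⟩) hnot
        · simp [if_neg (Ne.symm hlam), if_neg (Ne.symm hν), hν, dD_zero]
    · by_cases h1 : μ = lam
      · by_cases h2 : μ = ν
        · exact absurd (Or.inr (Or.inr (Or.inr (Or.inl ⟨hμ, fun h => hμ (h2.trans h),
            h1.symm⟩)))) hnot
        · by_cases hν : ν = 0
          · subst hν
            have hνlam : (0 : Fin 4) ≠ lam := fun h => hμ (h1.trans h.symm)
            simp [if_pos h1, if_neg h2, if_neg hνlam, if_neg hμ, dD_zero]
          · exact absurd (Or.inr (Or.inr (Or.inr (Or.inl ⟨hμ, hν, h1.symm⟩)))) hnot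
      · by_cases h2 : μ = ν
        · by_cases hlam : lam = 0
          · subst hlam
            have hνlam : ν ≠ (0 : Fin 4) := fun h => hμ (h2.trans h)
            simp [if_neg h1, if_pos h2, if_neg hνlam, if_neg hμ, dD_zero]
          · exact absurd (Or.inr (Or.inr (Or.inr (Or.inr (Or.inl ⟨hμ, hlam, h2.symm⟩)))))
              hnot
        · by_cases h3 : ν = lam
          · by_cases hν : ν = 0
            · exact absurd (Or.inr (Or.inr (Or.inl ⟨hμ, hν, h3 ▸ hν⟩))) hnot
            · exact absurd (Or.inr (Or.inr (Or.inr (Or.inr (Or.inr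
                ⟨hμ, hν, h3, fun h => h2 h⟩))))) hnot
          · simp [if_neg h1, if_neg h2, if_neg h3]
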